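/- arXiv:2403.19218 — 3 statements merged into one kernel-verified Lean document; each statement's English description precedes it below -/
import Mathlib

section
/- Let f : ℝ × ℝⁿ → ℝⁿ be continuous and L-Lipschitz in its second argument (L > 0). Let y : [0,T] → ℝⁿ solve y' = f(x,y), y(0) = y⁰, and let 0 = a₀ < a₁ < ⋯ < a_p = T. Suppose Nᵏ : [a_{k-1}, a_k] → ℝⁿ (k = 1,…,p) are functions and ȳᵏ : [a_{k-1}, a_k] → ℝⁿ are the exact solutions of the sub-IVPs (ȳᵏ)' = f(x, ȳᵏ) with ȳ¹(0) = y⁰ and ȳᵏ(a_{k-1}) = N^{k-1}(a_{k-1}) for k ≥ 2, and that sup_{x ∈ [a_{k-1},a_k]} ‖Nᵏ(x) − ȳᵏ(x)‖ ≤ ε for every k. Then the errors E_k := sup_{x ∈ [a_{k-1},a_k]} ‖Nᵏ(x) − y(x)‖ satisfy E₁ ≤ ε and the recursion E_k ≤ ε + e^{L(a_k − a_{k-1})} · E_{k-1} for 2 ≤ k ≤ p. -/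
open Set

/-- PWNN error recursion: with `Eₖ = sup_{x ∈ [a_{k-1}, a_k]} ‖Nᵏ(x) − y(x)‖`,
one has `E₁ ≤ ε` and `Eₖ ≤ ε + e^{L(a_k − a_{k-1})} E_{k-1}` for `2 ≤ k ≤ p`. -/
theorem pwnn_error_recursion {n : ℕ}
    (f : ℝ → (Fin n → ℝ) → (Fin n → ℝ)) (L : ℝ) (hL : 0 < L)
    (hf_cont : Continuous (Function.uncurry f))
    (hf_lip : ∀ x : ℝ, LipschitzWith (Real.toNNReal L) (f x))
    (T : ℝ) (y0 : Fin n → ℝ) (y : ℝ → (Fin n → ℝ))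
    (hy : ∀ x ∈ Icc (0 : ℝ) T, HasDerivWithinAt y (f x (y x)) (Icc (0 : ℝ) T) x)
    (hy0 : y 0 = y0)
    (p : ℕ) (hp : 1 ≤ p) (a : ℕ → ℝ)
    (ha0 : a 0 = 0) (haT : a p = T)
    (hmono : ∀ i, i < p → a i < a (i + 1))
    (N ybar : ℕ → ℝ → (Fin n → ℝ))
    (hybar_sol : ∀ k, 1 ≤ k → k ≤ p → ∀ x ∈ Icc (a (k - 1)) (a k),
      HasDerivWithinAt (ybar k) (f x (ybar k x)) (Icc (a (k - 1)) (a k)) x)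
    (hybar_init1 : ybar 1 0 = y0)
    (hybar_init : ∀ k, 2 ≤ k → k ≤ p → ybar k (a (k - 1)) = N (k - 1) (a (k - 1)))
    (ε : ℝ)
    (happrox : ∀ k, 1 ≤ k → k ≤ p → ∀ x ∈ Icc (a (k - 1)) (a k), ‖N k x - ybar k x‖ ≤ ε)
    (E : ℕ → ℝ)
    (hE : ∀ k, E k = ⨆ x : Icc (a (k - 1)) (a k), ‖N k x.1 - y x.1‖) :
    E 1 ≤ ε ∧
      ∀ k, 2 ≤ k → k ≤ p → E k ≤ ε + Real.exp (L * (a k - a (k - 1))) * E (k - 1) := by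
  -- monotonicity of the partition
  have hamono : ∀ i j, i ≤ j → j ≤ p → a i ≤ a j := by
    intro i j hij hjp
    induction j with
    | zero => simp [Nat.le_zero.mp hij]
    | succ m ih =>
      rcases Nat.lt_or_ge i (m + 1) with h | h
      · exact le_trans (ih (Nat.lt_succ_iff.mp h) (le_trans (Nat.le_succ m) hjp))
          (hmono m (lt_of_lt_of_le (Nat.lt_succ_self m) hjp)).le
      · have : i = m + 1 := le_antisymm hij h
        simp [this]
  have hLcoe : ((Real.toNNReal L : NNReal) : ℝ) = L := Real.coe_toNNReal _ hL.le
  -- continuity of y on [0, T]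
  have hycont : ContinuousOn y (Icc (0 : ℝ) T) := fun t ht => (hy t ht).continuousWithinAt
  -- derivative of y within Ici t on subintervals
  have hyderiv : ∀ c d : ℝ, 0 ≤ c → d ≤ T → ∀ t ∈ Ico c d,
      HasDerivWithinAt y (f t (y t)) (Ici t) t := by
    intro c d hc hd t ht
    have htT : t ∈ Icc (0 : ℝ) T := ⟨hc.trans ht.1, ht.2.le.trans hd⟩
    exact ((hy t htT).mono (Icc_subset_Icc_left htT.1)).mono_of_mem_nhdsWithin
      (Icc_mem_nhdsGE_of_mem ⟨le_rfl, lt_of_lt_of_le ht.2 hd⟩)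
  -- derivative conversion for ybar
  have key : ∀ (g : ℝ → Fin n → ℝ) (c d : ℝ),
      (∀ x ∈ Icc c d, HasDerivWithinAt g (f x (g x)) (Icc c d) x) →
      ∀ t ∈ Ico c d, HasDerivWithinAt g (f t (g t)) (Ici t) t := by
    intro g c d h t ht
    exact ((h t ⟨ht.1, ht.2.le⟩).mono (Icc_subset_Icc_left ht.1)).mono_of_mem_nhdsWithin
      (Icc_mem_nhdsGE_of_mem ⟨le_rfl, ht.2⟩)
  constructor
  · -- E 1 ≤ ε via uniqueness on [a 0, a 1]
    have h01 : a 0 < a 1 := hmono 0 hp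
    have ha1T : a 1 ≤ T := haT ▸ hamono 1 p hp le_rfl
    have hsub : Icc (a 0) (a 1) ⊆ Icc (0 : ℝ) T := Icc_subset_Icc (le_of_eq ha0.symm) ha1T
    have hybar1cont : ContinuousOn (ybar 1) (Icc (a 0) (a 1)) :=
      fun t ht => (hybar_sol 1 le_rfl hp t ht).continuousWithinAt
    have heq : EqOn (ybar 1) y (Icc (a 0) (a 1)) := by
      apply ODE_solution_unique hf_lip hybar1cont
        (key (ybar 1) (a 0) (a 1) (hybar_sol 1 le_rfl hp))
        (hycont.mono hsub) (hyderiv (a 0) (a 1) (le_of_eq ha0.symm) ha1T)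
      rw [ha0, hybar_init1, hy0]
    rw [hE 1]
    haveI : Nonempty (Icc (a 0) (a 1)) := (nonempty_Icc.mpr h01.le).to_subtype
    apply ciSup_le
    rintro ⟨x, hx⟩
    have : y x = ybar 1 x := (heq hx).symm
    simpa [this] using happrox 1 le_rfl hp x hx
  · intro k hk2 hkp
    have hk1 : k - 1 + 1 = k := by omega
    have hk11 : k - 1 - 1 + 1 = k - 1 := by omega
    have hcd : a (k - 1) < a k := by
      have := hmono (k - 1) (by omega); rwa [hk1] at this
    have hbc : a (k - 1 - 1) < a (k - 1) := by
      have := hmono (k - 1 - 1) (by omega); rwa [hk11] at this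
    have h0c : (0 : ℝ) ≤ a (k - 1) := ha0 ▸ hamono 0 (k - 1) (Nat.zero_le _) (by omega)
    have h0b : (0 : ℝ) ≤ a (k - 1 - 1) := ha0 ▸ hamono 0 (k - 1 - 1) (Nat.zero_le _) (by omega)
    have hcT : a (k - 1) ≤ T := haT ▸ hamono (k - 1) p (by omega) le_rfl
    have hdT : a k ≤ T := haT ▸ hamono k p hkp le_rfl
    set d := ‖N (k - 1) (a (k - 1)) - y (a (k - 1))‖ with hd_def
    -- boundedness of the sup defining E (k-1)
    have hybar1cont : ContinuousOn (ybar (k - 1)) (Icc (a (k - 1 - 1)) (a (k - 1))) :=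
      fun t ht => (hybar_sol (k - 1) (by omega) (by omega) t ht).continuousWithinAt
    have hycont' : ContinuousOn y (Icc (a (k - 1 - 1)) (a (k - 1))) :=
      hycont.mono (Icc_subset_Icc h0b hcT)
    obtain ⟨M, hM⟩ := isCompact_Icc.exists_bound_of_continuousOn (hybar1cont.sub hycont')
    have hbdd : BddAbove (range fun x : Icc (a (k - 1 - 1)) (a (k - 1)) =>
        ‖N (k - 1) x.1 - y x.1‖) := by
      refine ⟨ε + M, ?_⟩
      rintro r ⟨⟨x, hx⟩, rfl⟩
      have h1 : ‖N (k - 1) x - y x‖ ≤ ‖N (k - 1) x - ybar (k - 1) x‖ + ‖ybar (k - 1) x - y x‖ := by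
        calc ‖N (k - 1) x - y x‖
            = ‖(N (k - 1) x - ybar (k - 1) x) + (ybar (k - 1) x - y x)‖ := by
              rw [sub_add_sub_cancel]
          _ ≤ _ := norm_add_le _ _
      exact h1.trans (add_le_add (happrox (k - 1) (by omega) (by omega) x hx) (hM x hx))
    have hd_le : d ≤ E (k - 1) := by
      rw [hE (k - 1)]
      exact le_ciSup hbdd ⟨a (k - 1), ⟨hbc.le, le_rfl⟩⟩
    have hd_nonneg : (0 : ℝ) ≤ d := norm_nonneg _
    have hE_nonneg : (0 : ℝ) ≤ E (k - 1) := hd_nonneg.trans hd_le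
    -- Grönwall on [a (k-1), a k]
    have hybarkcont : ContinuousOn (ybar k) (Icc (a (k - 1)) (a k)) :=
      fun t ht => (hybar_sol k (by omega) hkp t ht).continuousWithinAt
    have hinit : dist (ybar k (a (k - 1))) (y (a (k - 1))) ≤ d := by
      rw [hybar_init k hk2 hkp, dist_eq_norm]
    have hgron := dist_le_of_trajectories_ODE hf_lip hybarkcont
      (key (ybar k) (a (k - 1)) (a k) (hybar_sol k (by omega) hkp))
      (hycont.mono (Icc_subset_Icc h0c hdT))
      (hyderiv (a (k - 1)) (a k) h0c hdT) hinit
    rw [hE k]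
    haveI : Nonempty (Icc (a (k - 1)) (a k)) := (nonempty_Icc.mpr hcd.le).to_subtype
    apply ciSup_le
    rintro ⟨x, hx⟩
    have h1 : ‖N k x - y x‖ ≤ ‖N k x - ybar k x‖ + ‖ybar k x - y x‖ := by
      calc ‖N k x - y x‖ = ‖(N k x - ybar k x) + (ybar k x - y x)‖ := by rw [sub_add_sub_cancel]
        _ ≤ _ := norm_add_le _ _
    have h2 : ‖ybar k x - y x‖ ≤ d * Real.exp (L * (x - a (k - 1))) := by
      have := hgron x hx
      rwa [hLcoe, dist_eq_norm] at this
    have h3 : d * Real.exp (L * (x - a (k - 1))) ≤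
        Real.exp (L * (a k - a (k - 1))) * E (k - 1) := by
      rw [mul_comm (Real.exp _)]
      exact mul_le_mul hd_le (Real.exp_le_exp.mpr (by nlinarith [hx.2])) (Real.exp_pos _).le
        hE_nonneg
    calc ‖N k x - y x‖ ≤ ‖N k x - ybar k x‖ + ‖ybar k x - y x‖ := h1
      _ ≤ ε + Real.exp (L * (a k - a (k - 1))) * E (k - 1) :=
        add_le_add (happrox k (by omega) hkp x hx) (h2.trans h3)
end

section
/- Under the hypotheses of the PWNN error recursion (f continuous and L-Lipschitz in y, y : [0,T] → ℝⁿ the exact solution with y(0)=y⁰, partition 0 = a₀ < ⋯ < a_p = T, ȳᵏ the exact sub-IVP solution with initial value N^{k-1}(a_{k-1}) at a_{k-1} (N⁰(0) := y⁰), and sup_{Δ_k} ‖Nᵏ − ȳᵏ‖ ≤ ε for all k), one has for every k ∈ {1,…,p} and every x ∈ [a_{k-1}, a_k]: ‖Nᵏ(x) − y(x)‖ ≤ ε · Σ_{j=1}^{k} e^{L(a_k − a_j)}; in particular the piecewise function ŷ, defined by ŷ(x) = Nᵏ(x) for x ∈ (a_{k-1}, a_k] and ŷ(0) = N¹(0),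 satisfies sup_{x ∈ [0,T]} ‖ŷ(x) − y(x)‖ ≤ p · ε · e^{LT}. -/
open Set

/-- Quantitative PWNN approximation: on each sub-interval
`‖Nᵏ(x) − y(x)‖ ≤ ε ∑_{j=1}^{k} e^{L(a_k − a_j)}`, and the assembled piecewise
function `ŷ` satisfies `sup_{x ∈ [0,T]} ‖ŷ(x) − y(x)‖ ≤ p ε e^{LT}`. -/
theorem pwnn_global_error_bound {n : ℕ}
    (f : ℝ → (Fin n → ℝ) → (Fin n → ℝ)) (L : ℝ) (hL : 0 < L)
    (hf_cont : Continuous (Function.uncurry f))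
    (hf_lip : ∀ x : ℝ, LipschitzWith (Real.toNNReal L) (f x))
    (T : ℝ) (y0 : Fin n → ℝ) (y : ℝ → (Fin n → ℝ))
    (hy : ∀ x ∈ Icc (0 : ℝ) T, HasDerivWithinAt y (f x (y x)) (Icc (0 : ℝ) T) x)
    (hy0 : y 0 = y0)
    (p : ℕ) (hp : 1 ≤ p) (a : ℕ → ℝ)
    (ha0 : a 0 = 0) (haT : a p = T)
    (hmono : ∀ i, i < p → a i < a (i + 1))
    (N ybar : ℕ → ℝ → (Fin n → ℝ))
    (hybar_sol : ∀ k, 1 ≤ k → k ≤ p → ∀ x ∈ Icc (a (k - 1)) (a k),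
      HasDerivWithinAt (ybar k) (f x (ybar k x)) (Icc (a (k - 1)) (a k)) x)
    (hybar_init1 : ybar 1 0 = y0)
    (hybar_init : ∀ k, 2 ≤ k → k ≤ p → ybar k (a (k - 1)) = N (k - 1) (a (k - 1)))
    (ε : ℝ)
    (happrox : ∀ k, 1 ≤ k → k ≤ p → ∀ x ∈ Icc (a (k - 1)) (a k), ‖N k x - ybar k x‖ ≤ ε)
    (yhat : ℝ → (Fin n → ℝ))
    (hyhat0 : yhat 0 = N 1 0)
    (hyhat : ∀ k, 1 ≤ k → k ≤ p → ∀ x ∈ Ioc (a (k - 1)) (a k), yhat x = N k x) :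
    (∀ k, 1 ≤ k → k ≤ p → ∀ x ∈ Icc (a (k - 1)) (a k),
      ‖N k x - y x‖ ≤ ε * ∑ j ∈ Finset.Icc 1 k, Real.exp (L * (a k - a j))) ∧
    (∀ x ∈ Icc (0 : ℝ) T, ‖yhat x - y x‖ ≤ (p : ℝ) * ε * Real.exp (L * T)) := by
  have hL0 : (0 : ℝ) ≤ L := hL.le
  -- monotonicity of the partition
  have hmono' : ∀ i j : ℕ, i ≤ j → j ≤ p → a i ≤ a j := by
    intro i j hij hjp
    induction j with
    | zero =>
      interval_cases i
      exact le_rfl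
    | succ m ih =>
      rcases Nat.lt_or_ge i (m + 1) with h | h
      · exact le_trans (ih (by omega) (by omega)) (hmono m (by omega)).le
      · have : i = m + 1 := le_antisymm hij h
        rw [this]
    
  have ha_nonneg : ∀ i, i ≤ p → 0 ≤ a i := by
    intro i hi; rw [← ha0]; exact hmono' 0 i (Nat.zero_le _) hi
  have ha_leT : ∀ i, i ≤ p → a i ≤ T := by
    intro i hi; rw [← haT]; exact hmono' i p hi le_rfl
  have hε : 0 ≤ ε :=
    le_trans (norm_nonneg _)
      (happrox 1 le_rfl hp (a 0) ⟨le_rfl, (hmono 0 (by omega)).le⟩)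
  have hyC : ContinuousOn y (Icc 0 T) := fun t ht => (hy t ht).continuousWithinAt
  -- Grönwall estimate on each subinterval
  have gron : ∀ k, 1 ≤ k → k ≤ p → ∀ x ∈ Icc (a (k - 1)) (a k),
      dist (ybar k x) (y x) ≤ dist (ybar k (a (k - 1))) (y (a (k - 1))) *
        Real.exp (L * (x - a (k - 1))) := by
    intro k hk1 hkp x hx
    have hsub : Icc (a (k - 1)) (a k) ⊆ Icc 0 T := by
      intro t ht
      exact ⟨le_trans (ha_nonneg (k - 1) (by omega)) ht.1,
        le_trans ht.2 (ha_leT k hkp)⟩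
    have h1 : ∀ t ∈ Ico (a (k - 1)) (a k),
        HasDerivWithinAt (ybar k) (f t (ybar k t)) (Ici t) t := by
      intro t ht
      exact (hybar_sol k hk1 hkp t (Ico_subset_Icc_self ht)).mono_of_mem_nhdsWithin
        (Icc_mem_nhdsGE_of_mem ht)
    have h2 : ∀ t ∈ Ico (a (k - 1)) (a k),
        HasDerivWithinAt y (f t (y t)) (Ici t) t := by
      intro t ht
      have htT : t ∈ Ico (0 : ℝ) T :=
        ⟨le_trans (ha_nonneg (k - 1) (by omega)) ht.1,
          lt_of_lt_of_le ht.2 (ha_leT k hkp)⟩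
      exact (hy t (Ico_subset_Icc_self htT)).mono_of_mem_nhdsWithin (Icc_mem_nhdsGE_of_mem htT)
    have hc1 : ContinuousOn (ybar k) (Icc (a (k - 1)) (a k)) :=
      fun t ht => (hybar_sol k hk1 hkp t ht).continuousWithinAt
    have := dist_le_of_trajectories_ODE hf_lip hc1 h1 (hyC.mono hsub) h2 le_rfl x hx
    rwa [Real.coe_toNNReal _ hL0] at this
  -- Part 1: the recursive error bound
  have main : ∀ k, 1 ≤ k → k ≤ p → ∀ x ∈ Icc (a (k - 1)) (a k),
      ‖N k x - y x‖ ≤ ε * ∑ j ∈ Finset.Icc 1 k, Real.exp (L * (a k - a j)) := by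
    intro k
    induction k with
    | zero => omega
    | succ m ih =>
      intro _ hkp x hx
      have hxm : x ∈ Icc (a m) (a (m + 1)) := by simpa using hx
      have key : ‖ybar (m + 1) x - y x‖ ≤
          ‖ybar (m + 1) (a m) - y (a m)‖ * Real.exp (L * (x - a m)) := by
        have := gron (m + 1) (by omega) hkp x hx
        simpa [dist_eq_norm] using this
      have hN : ‖N (m + 1) x - ybar (m + 1) x‖ ≤ ε := happrox (m + 1) (by omega) hkp x hx
      have tri : ‖N (m + 1) x - y x‖ ≤ ε + ‖ybar (m + 1) x - y x‖ := by
        calc ‖N (m + 1) x - y x‖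
            ≤ ‖N (m + 1) x - ybar (m + 1) x‖ + ‖ybar (m + 1) x - y x‖ :=
              norm_sub_le_norm_sub_add_norm_sub _ _ _
          _ ≤ ε + ‖ybar (m + 1) x - y x‖ := by linarith
      rcases Nat.eq_zero_or_pos m with hm0 | hm1
      · subst hm0
        have hinit : ybar 1 (a 0) = y (a 0) := by
          rw [ha0, hybar_init1, hy0]
        have : ‖ybar 1 x - y x‖ ≤ 0 := by
          have := key
          rw [hinit] at this
          simpa using this
        have hb : ‖N 1 x - y x‖ ≤ ε := by linarith [norm_nonneg (ybar 1 x - y x)]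
        simpa using hb
      · -- m ≥ 1
        have hIH : ‖N m (a m) - y (a m)‖ ≤
            ε * ∑ j ∈ Finset.Icc 1 m, Real.exp (L * (a m - a j)) := by
          apply ih hm1 (by omega) (a m)
          exact ⟨hmono' (m - 1) m (by omega) (by omega), le_rfl⟩
        have hinit : ybar (m + 1) (a m) = N m (a m) := by
          have := hybar_init (m + 1) (by omega) hkp
          simpa using this
        have hexp : Real.exp (L * (x - a m)) ≤ Real.exp (L * (a (m + 1) - a m)) := by
          apply Real.exp_le_exp.mpr
          have := hxm.2
          nlinarith
        have hIH' : ‖ybar (m + 1) (a m) - y (a m)‖ * Real.exp (L * (x - a m)) ≤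
            (ε * ∑ j ∈ Finset.Icc 1 m, Real.exp (L * (a m - a j))) *
              Real.exp (L * (a (m + 1) - a m)) := by
          rw [hinit]
          apply mul_le_mul hIH hexp (Real.exp_pos _).le
          positivity
        have hsum : (ε * ∑ j ∈ Finset.Icc 1 m, Real.exp (L * (a m - a j))) *
              Real.exp (L * (a (m + 1) - a m))
            = ε * ∑ j ∈ Finset.Icc 1 m, Real.exp (L * (a (m + 1) - a j)) := by
          rw [mul_assoc, Finset.sum_mul]
          congr 1
          apply Finset.sum_congr rfl
          intro j _
          rw [← Real.exp_add]
          ring_nf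
        have hgoal : ε * ∑ j ∈ Finset.Icc 1 (m + 1), Real.exp (L * (a (m + 1) - a j))
            = ε * ∑ j ∈ Finset.Icc 1 m, Real.exp (L * (a (m + 1) - a j)) + ε := by
          rw [Finset.sum_Icc_succ_top (by omega)]
          rw [mul_add]
          simp
        rw [hgoal]
        calc ‖N (m + 1) x - y x‖ ≤ ε + ‖ybar (m + 1) x - y x‖ := tri
          _ ≤ ε + ‖ybar (m + 1) (a m) - y (a m)‖ * Real.exp (L * (x - a m)) := by
              linarith [key]
          _ ≤ ε + ε * ∑ j ∈ Finset.Icc 1 m, Real.exp (L * (a (m + 1) - a j)) := by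
              rw [← hsum]; linarith [hIH']
          _ = ε * ∑ j ∈ Finset.Icc 1 m, Real.exp (L * (a (m + 1) - a j)) + ε := by ring
  refine ⟨main, ?_⟩
  -- Part 2
  have hbound : ∀ k, 1 ≤ k → k ≤ p →
      ε * ∑ j ∈ Finset.Icc 1 k, Real.exp (L * (a k - a j)) ≤
        (p : ℝ) * ε * Real.exp (L * T) := by
    intro k hk1 hkp
    have hsum_le : ∑ j ∈ Finset.Icc 1 k, Real.exp (L * (a k - a j)) ≤
        (k : ℝ) * Real.exp (L * T) := by
      have : ∀ j ∈ Finset.Icc 1 k, Real.exp (L * (a k - a j)) ≤ Real.exp (L * T) := by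
        intro j hj
        simp only [Finset.mem_Icc] at hj
        apply Real.exp_le_exp.mpr
        have h1 : a k ≤ T := ha_leT k hkp
        have h2 : 0 ≤ a j := ha_nonneg j (by omega)
        nlinarith
      calc ∑ j ∈ Finset.Icc 1 k, Real.exp (L * (a k - a j))
          ≤ ∑ _j ∈ Finset.Icc 1 k, Real.exp (L * T) := Finset.sum_le_sum this
        _ = (k : ℝ) * Real.exp (L * T) := by
            rw [Finset.sum_const, Nat.card_Icc]
            simp [Nat.add_sub_cancel]
    calc ε * ∑ j ∈ Finset.Icc 1 k, Real.exp (L * (a k - a j))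
        ≤ ε * ((k : ℝ) * Real.exp (L * T)) := by
          apply mul_le_mul_of_nonneg_left hsum_le hε
      _ = (k : ℝ) * ε * Real.exp (L * T) := by ring
      _ ≤ (p : ℝ) * ε * Real.exp (L * T) := by
          have hk : (k : ℝ) ≤ (p : ℝ) := by exact_mod_cast hkp
          have he : (0 : ℝ) ≤ Real.exp (L * T) := (Real.exp_pos _).le
          nlinarith [mul_nonneg (mul_nonneg (sub_nonneg.mpr hk) hε) he]
  have find : ∀ m : ℕ, m ≤ p → ∀ x : ℝ, 0 < x → x ≤ a m →
      ∃ k, 1 ≤ k ∧ k ≤ m ∧ a (k - 1) < x ∧ x ≤ a k := by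
    intro m
    induction m with
    | zero => intro _ x hx0 hxm; rw [ha0] at hxm; linarith
    | succ m ih =>
      intro hmp x hx0 hxm
      by_cases h : a m < x
      · exact ⟨m + 1, by omega, le_rfl, by simpa using h, hxm⟩
      · obtain ⟨k, h1, h2, h3, h4⟩ := ih (by omega) x hx0 (not_lt.mp h)
        exact ⟨k, h1, by omega, h3, h4⟩
  intro x hx
  rcases eq_or_lt_of_le hx.1 with h0 | h0
  · -- x = 0
    have hx0 : x = 0 := h0.symm
    subst hx0
    rw [hyhat0]
    have h01 : (0 : ℝ) ∈ Icc (a 0) (a 1) := by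
      rw [ha0]; exact ⟨le_rfl, by rw [← ha0]; exact (hmono 0 (by omega)).le⟩
    have := main 1 le_rfl hp 0 (by simpa using h01)
    exact le_trans this (hbound 1 le_rfl hp)
  · obtain ⟨k, hk1, hkp, hkl, hkr⟩ := find p le_rfl x h0 (by rw [haT]; exact hx.2)
    rw [hyhat k hk1 hkp x ⟨hkl, hkr⟩]
    exact le_trans (main k hk1 hkp x ⟨hkl.le, hkr⟩) (hbound k hk1 hkp)
end

section
/- Let f : ℝ × ℝⁿ → ℝⁿ be continuous and L-Lipschitz in its second argument (L > 0), and let y : [0,T] → ℝⁿ solve y' = f(x,y), y(0) = y⁰. Let 0 = a₀ < a₁ < ⋯ < a_p = T be a partition, and suppose each Nᵏ : [a_{k-1}, a_k] → ℝⁿ is continuously differentiable with: residual bound ‖(Nᵏ)'(x) − f(x, Nᵏ(x))‖ ≤ η for all x ∈ [a_{k-1}, a_k]; interface/initial mismatch ‖N¹(0) − y⁰‖ ≤ δ and ‖Nᵏ(a_{k-1}) − N^{k-1}(a_{k-1})‖ ≤ δ for k ≥ 2. Then the piecewise function ŷ (ŷ(x) = Nᵏ(x) on (a_{k-1}, a_k],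 ŷ(0) = N¹(0)) satisfies the global error bound sup_{x ∈ [0,T]} ‖ŷ(x) − y(x)‖ ≤ e^{LT} · p · (δ + η/L). -/
open Set

/-- End-to-end PWNN error bound: if each sub-network `Nᵏ` has ODE residual at most `η` on
its sub-interval and interface/initial mismatch at most `δ`, then the assembled piecewise
solution `ŷ` satisfies `sup_{x ∈ [0,T]} ‖ŷ(x) − y(x)‖ ≤ e^{LT} p (δ + η/L)`. -/
theorem pwnn_end_to_end_bound {n : ℕ}
    (f : ℝ → (Fin n → ℝ) → (Fin n → ℝ)) (L : ℝ) (hL : 0 < L)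
    (hf_cont : Continuous (Function.uncurry f))
    (hf_lip : ∀ x : ℝ, LipschitzWith (Real.toNNReal L) (f x))
    (T : ℝ) (y0 : Fin n → ℝ) (y : ℝ → (Fin n → ℝ))
    (hy : ∀ x ∈ Icc (0 : ℝ) T, HasDerivWithinAt y (f x (y x)) (Icc (0 : ℝ) T) x)
    (hy0 : y 0 = y0)
    (p : ℕ) (hp : 1 ≤ p) (a : ℕ → ℝ)
    (ha0 : a 0 = 0) (haT : a p = T)
    (hmono : ∀ i, i < p → a i < a (i + 1))
    (N Nd : ℕ → ℝ → (Fin n → ℝ))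
    (hNderiv : ∀ k, 1 ≤ k → k ≤ p → ∀ x ∈ Icc (a (k - 1)) (a k),
      HasDerivWithinAt (N k) (Nd k x) (Icc (a (k - 1)) (a k)) x)
    (hNdcont : ∀ k, 1 ≤ k → k ≤ p → ContinuousOn (Nd k) (Icc (a (k - 1)) (a k)))
    (η δ : ℝ)
    (hres : ∀ k, 1 ≤ k → k ≤ p → ∀ x ∈ Icc (a (k - 1)) (a k),
      ‖Nd k x - f x (N k x)‖ ≤ η)
    (hinit1 : ‖N 1 0 - y0‖ ≤ δ)
    (hinterface : ∀ k, 2 ≤ k → k ≤ p →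
      ‖N k (a (k - 1)) - N (k - 1) (a (k - 1))‖ ≤ δ)
    (yhat : ℝ → (Fin n → ℝ))
    (hyhat0 : yhat 0 = N 1 0)
    (hyhat : ∀ k, 1 ≤ k → k ≤ p → ∀ x ∈ Ioc (a (k - 1)) (a k), yhat x = N k x) :
    ∀ x ∈ Icc (0 : ℝ) T,
      ‖yhat x - y x‖ ≤ Real.exp (L * T) * (p : ℝ) * (δ + η / L) := by
  have hKL : ((Real.toNNReal L : NNReal) : ℝ) = L := Real.coe_toNNReal L hL.le
  have hδ : 0 ≤ δ := le_trans (norm_nonneg _) hinit1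
  -- monotonicity of the partition
  have ha_mono : ∀ i j : ℕ, i ≤ j → j ≤ p → a i ≤ a j := by
    intro i j hij hjp
    induction j, hij using Nat.le_induction with
    | base => exact le_refl _
    | succ j hij ih =>
      exact le_trans (ih (by omega)) (le_of_lt (hmono j (by omega)))
  have hη : 0 ≤ η := by
    have h01 : a 0 ≤ a 1 := ha_mono 0 1 (by omega) hp
    have := hres 1 le_rfl hp (a 0) ⟨le_rfl, by simpa using h01⟩
    exact le_trans (norm_nonneg _) this
  have hηL : 0 ≤ η / L := div_nonneg hη hL.le
  set D : ℝ := δ + η / L with hD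
  have hD0 : 0 ≤ D := by positivity
  have ha_nonneg : ∀ i, i ≤ p → 0 ≤ a i := by
    intro i hi; rw [← ha0]; exact ha_mono 0 i (Nat.zero_le _) hi
  -- Grönwall step on a single sub-interval
  have step : ∀ k, 1 ≤ k → k ≤ p → ∀ δ₀ : ℝ,
      ‖N k (a (k - 1)) - y (a (k - 1))‖ ≤ δ₀ →
      ∀ z ∈ Icc (a (k - 1)) (a k), ‖N k z - y z‖ ≤
        δ₀ * Real.exp (L * (z - a (k - 1))) +
          η / L * (Real.exp (L * (z - a (k - 1))) - 1) := by
    intro k hk1 hkp δ₀ hδ₀ z hz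
    have hsub : Icc (a (k - 1)) (a k) ⊆ Icc (0 : ℝ) T := by
      intro t ht
      exact ⟨le_trans (ha_nonneg (k - 1) (by omega)) ht.1,
        le_trans ht.2 (by rw [← haT]; exact ha_mono k p hkp le_rfl)⟩
    have hakT : a k ≤ T := by rw [← haT]; exact ha_mono k p hkp le_rfl
    have key := dist_le_of_approx_trajectories_ODE (v := f) (K := Real.toNNReal L)
      (f := N k) (g := y) (f' := Nd k) (g' := fun t => f t (y t))
      (εf := η) (εg := 0) (δ := δ₀) (a := a (k - 1)) (b := a k)
      hf_lip
      (fun t ht => (hNderiv k hk1 hkp t ht).continuousWithinAt)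
      (fun t ht => (hNderiv k hk1 hkp t (Ico_subset_Icc_self ht)).mono_of_mem_nhdsWithin
        (Icc_mem_nhdsGE_of_mem ht))
      (fun t ht => by
        rw [dist_eq_norm]; exact hres k hk1 hkp t (Ico_subset_Icc_self ht))
      (fun t ht => ((hy t (hsub ht)).continuousWithinAt).mono hsub)
      (fun t ht => (hy t (hsub (Ico_subset_Icc_self ht))).mono_of_mem_nhdsWithin
        (Icc_mem_nhdsGE_of_mem
          ⟨le_trans (ha_nonneg (k - 1) (by omega)) ht.1, lt_of_lt_of_le ht.2 hakT⟩))
      (fun t ht => by rw [dist_self])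
      (by rw [dist_eq_norm]; exact hδ₀)
      z hz
    rw [dist_eq_norm] at key
    have hK0 : ((Real.toNNReal L : NNReal) : ℝ) ≠ 0 := by rw [hKL]; exact hL.ne'
    rw [gronwallBound_of_K_ne_0 hK0] at key
    simpa [hKL, mul_comm] using key
  -- the main inductive error bound
  have key : ∀ k, 1 ≤ k → k ≤ p → ∀ z ∈ Icc (a (k - 1)) (a k),
      ‖N k z - y z‖ ≤ Real.exp (L * z) * (k : ℝ) * D := by
    intro k hk1
    induction k, hk1 using Nat.le_induction with
    | base =>
      intro hkp z hz
      have h0 : ‖N 1 (a 0) - y (a 0)‖ ≤ δ := by rw [ha0, hy0]; exact hinit1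
      have := step 1 le_rfl hkp δ h0 z hz
      have hz0 : a 0 ≤ z := hz.1
      have hexp : Real.exp (L * (z - a 0)) = Real.exp (L * z) := by rw [ha0]; ring_nf
      rw [hexp] at this
      have hE1 : (1 : ℝ) ≤ Real.exp (L * z) := by
        rw [ha0] at hz0
        exact Real.one_le_exp (by positivity)
      calc ‖N 1 z - y z‖ ≤ δ * Real.exp (L * z) + η / L * (Real.exp (L * z) - 1) := this
        _ ≤ Real.exp (L * z) * (1 : ℕ) * D := by
            push_cast; rw [hD]; nlinarith
    | succ k hk1 ih =>
      intro hkp z hz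
      simp only [Nat.add_sub_cancel] at hz ⊢
      have hkp' : k ≤ p := by omega
      have hik : a (k - 1) ≤ a k := ha_mono (k - 1) k (by omega) hkp'
      have hprev : ‖N k (a k) - y (a k)‖ ≤ Real.exp (L * a k) * (k : ℝ) * D :=
        ih hkp' (a k) ⟨hik, le_rfl⟩
      have hint : ‖N (k + 1) (a k) - N k (a k)‖ ≤ δ := by
        have := hinterface (k + 1) (by omega) hkp
        simpa using this
      set A : ℝ := Real.exp (L * a k) with hA
      have hA1 : (1 : ℝ) ≤ A := Real.one_le_exp (by
        have := ha_nonneg k hkp'; positivity)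
      have hδ₀ : ‖N (k + 1) (a k) - y (a k)‖ ≤ δ + A * (k : ℝ) * D := by
        calc ‖N (k + 1) (a k) - y (a k)‖
            ≤ ‖N (k + 1) (a k) - N k (a k)‖ + ‖N k (a k) - y (a k)‖ := by
              have := norm_sub_le_norm_sub_add_norm_sub
                (N (k + 1) (a k)) (N k (a k)) (y (a k))
              exact this
          _ ≤ δ + A * (k : ℝ) * D := add_le_add hint hprev
      have hstep := step (k + 1) (by omega) hkp (δ + A * (k : ℝ) * D)
        (by simpa using hδ₀) z (by simpa using hz)
      simp only [Nat.add_sub_cancel] at hstep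
      set E : ℝ := Real.exp (L * (z - a k)) with hE
      have hE1 : (1 : ℝ) ≤ E := Real.one_le_exp (by nlinarith [hz.1])
      have hEA : Real.exp (L * z) = E * A := by
        rw [hE, hA, ← Real.exp_add]; ring_nf
      rw [hEA]
      push_cast
      rw [hD] at hstep ⊢
      have hE0 : (0:ℝ) ≤ E := le_trans zero_le_one hE1
      nlinarith [mul_nonneg (mul_nonneg hE0 (by linarith : (0:ℝ) ≤ δ + η / L))
        (sub_nonneg.mpr hA1), hηL]
  -- conclude
  intro x hx
  have hT0 : 0 ≤ T := hx.1.trans hx.2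
  have hexpT : (1 : ℝ) ≤ Real.exp (L * T) := Real.one_le_exp (by positivity)
  rcases eq_or_lt_of_le hx.1 with h0 | h0
  · -- x = 0
    rw [← h0, hyhat0]
    have h01 : a 0 ≤ a 1 := ha_mono 0 1 (by omega) hp
    have := key 1 le_rfl hp 0 ⟨by rw [ha0], by rw [← ha0]; exact h01⟩
    calc ‖N 1 0 - y 0‖ ≤ Real.exp (L * 0) * ((1 : ℕ) : ℝ) * D := this
      _ = D := by simp
      _ = 1 * 1 * D := by ring
      _ ≤ Real.exp (L * T) * (p : ℝ) * D := by
          have hp1 : (1:ℝ) ≤ (p:ℝ) := by exact_mod_cast hp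
          apply mul_le_mul_of_nonneg_right _ hD0
          exact mul_le_mul hexpT hp1 zero_le_one (le_trans zero_le_one hexpT)
  · -- x > 0
    have hex : ∃ k, x ≤ a k := ⟨p, by rw [haT]; exact hx.2⟩
    set k := Nat.find hex with hk
    have hxk : x ≤ a k := Nat.find_spec hex
    have hk1 : 1 ≤ k := by
      rcases Nat.eq_zero_or_pos k with h | h
      · exfalso
        have := hxk; rw [h, ha0] at this; linarith
      · exact h
    have hkp : k ≤ p := Nat.find_le (by rw [haT]; exact hx.2)
    have hlt : a (k - 1) < x := by
      by_contra hcon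
      push_neg at hcon
      exact Nat.find_min hex (by omega : k - 1 < k) hcon
    have hyx : yhat x = N k x := hyhat k hk1 hkp x ⟨hlt, hxk⟩
    rw [hyx]
    have := key k hk1 hkp x ⟨hlt.le, hxk⟩
    refine this.trans ?_
    have hexp : Real.exp (L * x) ≤ Real.exp (L * T) :=
      Real.exp_le_exp.mpr (by nlinarith [hx.2])
    have hkpc : (k : ℝ) ≤ (p : ℝ) := Nat.cast_le.mpr hkp
    have h1 : Real.exp (L * x) * (k:ℝ) * D ≤ Real.exp (L * T) * (k:ℝ) * D :=
      mul_le_mul_of_nonneg_right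
        (mul_le_mul_of_nonneg_right hexp (Nat.cast_nonneg k)) hD0
    have h2 : Real.exp (L * T) * (k:ℝ) * D ≤ Real.exp (L * T) * (p:ℝ) * D :=
      mul_le_mul_of_nonneg_right
        (mul_le_mul_of_nonneg_left hkpc (Real.exp_pos _).le) hD0
    linarith
end
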